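/- arXiv:1807.08738 — 2 statements merged into one kernel-verified Lean document; each statement's English description precedes it below -/
import Mathlib

section
/- Let G be a finite undirected weighted graph with distinct edge weights, H a subgraph of G, and F the minimum spanning forest of H. Then every edge of the minimum spanning forest of G is either an edge of F or an F-light edge of G. -/
/-- Total weight of a subgraph `F` (sum of `w` over its edges). -/
noncomputable def weightSum {V : Type*} [Fintype V] [DecidableEq V]
    (w : Sym2 V → ℝ) (F : SimpleGraph V) : ℝ :=
  ∑ e : Sym2 V, F.edgeSet.indicator w e

/-- `F` is a minimum spanning forest of `G` w.r.t. weights `w`: a minimum-weight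
acyclic subgraph of `G` preserving connectivity. -/
def IsMSF {V : Type*} [Fintype V] [DecidableEq V]
    (G : SimpleGraph V) (w : Sym2 V → ℝ) (F : SimpleGraph V) : Prop :=
  F ≤ G ∧ F.IsAcyclic ∧ (∀ u v, G.Reachable u v → F.Reachable u v) ∧
    ∀ F' : SimpleGraph V, F' ≤ G → F'.IsAcyclic →
      (∀ u v, G.Reachable u v → F'.Reachable u v) → weightSum w F ≤ weightSum w F'

/-- The subgraph of `F` consisting of edges of weight `< c`. -/
def lighterSub {V : Type*} (F : SimpleGraph V) (w : Sym2 V → ℝ) (c : ℝ) : SimpleGraph V :=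
  SimpleGraph.fromRel (fun x y => F.Adj x y ∧ w s(x, y) < c)

/-- An edge `{u,v}` of `G` is `F`-light iff it is not the heaviest edge of the cycle in
`F ∪ {e}`; equivalently, its endpoints are not connected by edges of `F` lighter than it
(edges joining distinct trees of `F` are `F`-light). -/
def FLight {V : Type*} [Fintype V] [DecidableEq V]
    (G F : SimpleGraph V) (w : Sym2 V → ℝ) (u v : V) : Prop :=
  G.Adj u v ∧ ¬ (lighterSub F w (w s(u, v))).Reachable u v

section Helpers

open SimpleGraph

variable {V : Type*}


lemma reach_of_adj_reach {A B : SimpleGraph V} (h : ∀ a b, A.Adj a b → B.Reachable a b)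
    {a b : V} (r : A.Reachable a b) : B.Reachable a b := by
  obtain ⟨q⟩ := r
  induction q with
  | nil => exact Reachable.refl _
  | cons hadj _ ih => exact (h _ _ hadj).trans ih

lemma reach_split {M : SimpleGraph V} {u v a b : V}
    (q : M.Walk a b) (hb : b = u ∨ b = v) :
    (M \ fromEdgeSet {s(u,v)}).Reachable a u ∨ (M \ fromEdgeSet {s(u,v)}).Reachable a v := by
  induction q with
  | nil =>
    rcases hb with rfl | rfl
    · exact Or.inl (Reachable.refl _)
    · exact Or.inr (Reachable.refl _)
  | @cons a c _ hadj q ih =>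
    by_cases hc : s(a,c) = s(u,v)
    · rcases Sym2.eq_iff.mp hc with ⟨rfl, rfl⟩ | ⟨rfl, rfl⟩
      · exact Or.inl (Reachable.refl _)
      · exact Or.inr (Reachable.refl _)
    · have hadj' : (M \ fromEdgeSet {s(u,v)}).Adj a c := by
        simp [sdiff_adj, fromEdgeSet_adj, hadj, hc]
      rcases ih hb with h | h
      · exact Or.inl (hadj'.reachable.trans h)
      · exact Or.inr (hadj'.reachable.trans h)

lemma reach_sup {A : SimpleGraph V} {x y a b : V}
    (q : (A ⊔ fromEdgeSet {s(x,y)}).Walk a b) :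
    A.Reachable a b ∨ (A.Reachable a x ∧ A.Reachable y b) ∨
      (A.Reachable a y ∧ A.Reachable x b) := by
  induction q with
  | nil => exact Or.inl (Reachable.refl _)
  | @cons a c _ hadj q ih =>
    rcases (sup_adj _ _ _ _).mp hadj with h | h
    · rcases ih with h1 | ⟨h1, h2⟩ | ⟨h1, h2⟩
      · exact Or.inl (h.reachable.trans h1)
      · exact Or.inr (Or.inl ⟨h.reachable.trans h1, h2⟩)
      · exact Or.inr (Or.inr ⟨h.reachable.trans h1, h2⟩)
    · obtain ⟨hmem, -⟩ := (fromEdgeSet_adj _).mp h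
      rcases Sym2.eq_iff.mp (Set.mem_singleton_iff.mp hmem) with ⟨rfl, rfl⟩ | ⟨rfl, rfl⟩
      · rcases ih with h1 | ⟨h1, h2⟩ | ⟨h1, h2⟩
        · exact Or.inr (Or.inl ⟨Reachable.refl _, h1⟩)
        · exact Or.inr (Or.inl ⟨Reachable.refl _, h2⟩)
        · exact Or.inl h2
      · rcases ih with h1 | ⟨h1, h2⟩ | ⟨h1, h2⟩
        · exact Or.inr (Or.inr ⟨Reachable.refl _, h1⟩)
        · exact Or.inl h2
        · exact Or.inr (Or.inr ⟨Reachable.refl _, h2⟩)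

lemma sum_indicator_insert [Fintype V] [DecidableEq V] (w : Sym2 V → ℝ)
    (s : Set (Sym2 V)) (a : Sym2 V) (ha : a ∉ s) :
    ∑ e : Sym2 V, (insert a s).indicator w e = w a + ∑ e : Sym2 V, s.indicator w e := by
  have h : ∀ e : Sym2 V, (insert a s).indicator w e
      = (if e = a then w a else 0) + s.indicator w e := by
    intro e
    by_cases he : e = a
    · subst he
      simp [Set.indicator_of_mem, Set.indicator_of_notMem ha]
    · by_cases hs : e ∈ s <;> simp [Set.indicator, he, hs]
  simp_rw [h]
  rw [Finset.sum_add_distrib, Finset.sum_ite_eq' Finset.univ a (fun _ => w a)]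
  simp

end Helpers

open SimpleGraph

/-- if `H ⊆ G`, weights are distinct, and `F` is the MSF of `H`, then every
edge of the MSF of `G` is an edge of `F` or an `F`-light edge of `G`. -/
theorem stmt1 {V : Type*} [Fintype V] [DecidableEq V]
    (G H F M : SimpleGraph V) (w : Sym2 V → ℝ)
    (hHG : H ≤ G)
    (hdistinct : ∀ e₁ ∈ G.edgeSet, ∀ e₂ ∈ G.edgeSet, w e₁ = w e₂ → e₁ = e₂)
    (hF : IsMSF H w F) (hM : IsMSF G w M) :
    ∀ u v, M.Adj u v → F.Adj u v ∨ FLight G F w u v := by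

  intro u v huv
  right
  refine ⟨hM.1 huv, ?_⟩
  intro hreach
  set c := w s(u, v) with hc
  have hFG : F ≤ G := le_trans hF.1 hHG
  have hL : ∀ a b, (lighterSub F w c).Adj a b → F.Adj a b ∧ w s(a, b) < c := by
    intro a b hab
    simp only [lighterSub, fromRel_adj] at hab
    rcases hab.2 with ⟨h1, h2⟩ | ⟨h1, h2⟩
    · exact ⟨h1, h2⟩
    · exact ⟨h1.symm, by rwa [Sym2.eq_swap]⟩
  obtain ⟨p⟩ := hreach
  set M' : SimpleGraph V := M \ fromEdgeSet {s(u, v)} with hM'def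
  have hM'M : M' ≤ M := sdiff_le
  have huv' : ¬ M'.Reachable u v := by
    have hb := (isAcyclic_iff_forall_adj_isBridge.mp hM.2.1) huv
    exact isBridge_iff.mp hb
  set S : Set V := {z | M'.Reachable u z} with hS
  have huS : u ∈ S := Reachable.refl u
  have hvS : v ∉ S := fun h => huv' h
  obtain ⟨d, hd, hxS, hyS⟩ := p.exists_boundary_dart S huS hvS
  set x := d.fst with hx
  set y := d.snd with hy
  obtain ⟨hFxy, hwxy⟩ := hL _ _ d.adj
  have hxy : x ≠ y := hFxy.ne
  -- y is reachable to v in M'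
  have hyu : M.Reachable y u := by
    refine hM.2.2.1 y u ?_
    exact ((hFG hFxy).symm.reachable.symm).symm.trans
      (reach_of_adj_reach (fun a b h => ((hM.1 (hM'M h)).reachable)) hxS.symm)
  obtain ⟨qy⟩ := hyu
  have hyv : M'.Reachable y v := by
    rcases reach_split qy (Or.inl rfl) with h | h
    · exact absurd h.symm hyS
    · exact h
  set f := s(x, y) with hf
  set M'' : SimpleGraph V := M' ⊔ fromEdgeSet {f} with hM''def
  have hM'M'' : M' ≤ M'' := le_sup_left
  have hfM' : ¬ M'.Adj x y := fun h => hyS (hxS.trans h.reachable)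
  have hadjf : M''.Adj x y := by
    apply (sup_adj _ _ _ _).mpr
    exact Or.inr ((fromEdgeSet_adj _).mpr ⟨rfl, hxy⟩)
  have huv'' : M''.Reachable u v :=
    ((hxS.mono hM'M'').trans hadjf.reachable).trans (hyv.mono hM'M'')
  -- M'' ≤ G
  have hM''G : M'' ≤ G := by
    apply sup_le (le_trans hM'M hM.1)
    intro a b hab
    obtain ⟨hmem, -⟩ := (fromEdgeSet_adj _).mp hab
    rcases Sym2.eq_iff.mp (Set.mem_singleton_iff.mp hmem) with ⟨rfl, rfl⟩ | ⟨rfl, rfl⟩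
    · exact hFG hFxy
    · exact (hFG hFxy).symm
  -- M'' is acyclic
  have hac : M''.IsAcyclic := by
    rw [isAcyclic_iff_forall_adj_isBridge]
    intro a b hab
    rw [isBridge_iff]
    refine fun hr => ?_
    rcases (sup_adj _ _ _ _).mp hab with hab' | hab'
    · have hle : M'' \ fromEdgeSet {s(a, b)} ≤ (M' \ fromEdgeSet {s(a, b)}) ⊔ fromEdgeSet {f} := by
        intro p' q' hpq
        rw [sdiff_adj] at hpq
        rcases (sup_adj _ _ _ _).mp hpq.1 with h | h
        · exact (sup_adj _ _ _ _).mpr (Or.inl ((sdiff_adj _ _ _ _).mpr ⟨h, hpq.2⟩))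
        · exact (sup_adj _ _ _ _).mpr (Or.inr h)
      obtain ⟨q⟩ := hr.mono hle
      have hM'sub : (M' \ fromEdgeSet {s(a, b)}) ≤ M' := sdiff_le
      rcases reach_sup q with h | ⟨h1, h2⟩ | ⟨h1, h2⟩
      · have hbM := (isAcyclic_iff_forall_adj_isBridge.mp hM.2.1) (hM'M hab')
        refine isBridge_iff.mp hbM (h.mono (?_ : M' \ fromEdgeSet {s(a, b)} ≤ M \ fromEdgeSet {s(a, b)}))
        intro p' q' hpq
        rw [sdiff_adj] at hpq ⊢
        exact ⟨hM'M hpq.1, hpq.2⟩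
      · exact hyS (hxS.trans ((h1.mono hM'sub).symm.trans
          (hab'.reachable.trans (h2.mono hM'sub).symm)))
      · exact hyS (hxS.trans ((h2.mono hM'sub).trans
          (hab'.symm.reachable.trans (h1.mono hM'sub))))
    · obtain ⟨hmem, -⟩ := (fromEdgeSet_adj _).mp hab'
      have hle : M'' \ fromEdgeSet {s(a, b)} ≤ M' := by
        intro p' q' hpq
        rw [sdiff_adj] at hpq
        rcases (sup_adj _ _ _ _).mp hpq.1 with h | h
        · exact h
        · exfalso
          apply hpq.2
          rw [Set.mem_singleton_iff.mp hmem] at *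
          exact ((fromEdgeSet_adj _).mpr ⟨by
            rw [Set.mem_singleton_iff]
            exact Set.mem_singleton_iff.mp ((fromEdgeSet_adj _).mp h).1, hpq.1.ne⟩)
      have hrx : M'.Reachable a b := hr.mono hle
      rcases Sym2.eq_iff.mp (Set.mem_singleton_iff.mp hmem) with ⟨rfl, rfl⟩ | ⟨rfl, rfl⟩
      · exact hyS (hxS.trans hrx)
      · exact hyS (hxS.trans hrx.symm)
  -- M'' preserves connectivity
  have hconn : ∀ a b, G.Reachable a b → M''.Reachable a b := by
    intro a b hab
    refine reach_of_adj_reach ?_ (hM.2.2.1 a b hab)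
    intro p' q' hpq
    by_cases hpq' : s(p', q') = s(u, v)
    · rcases Sym2.eq_iff.mp hpq' with ⟨rfl, rfl⟩ | ⟨rfl, rfl⟩
      · exact huv''
      · exact huv''.symm
    · refine Adj.reachable (hM'M'' ?_)
      simp [hM'def, sdiff_adj, fromEdgeSet_adj, hpq, hpq']
  -- edge set computations
  have hediag : ¬ (s(u, v) : Sym2 V).IsDiag := by simp [huv.ne]
  have hfdiag : ¬ (f : Sym2 V).IsDiag := by simp [hf, hxy]
  have hM'edge : M'.edgeSet = M.edgeSet \ {s(u, v)} := by
    rw [hM'def, edgeSet_sdiff, edgeSet_fromEdgeSet]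
    ext e'
    simp only [Set.mem_diff, Set.mem_singleton_iff, Set.mem_setOf_eq]
    constructor
    · rintro ⟨h1, h2⟩
      refine ⟨h1, fun h3 => h2 ⟨h3, h3 ▸ hediag⟩⟩
    · rintro ⟨h1, h2⟩
      exact ⟨h1, fun h3 => h2 h3.1⟩
  have heM' : s(u, v) ∉ M'.edgeSet := by
    rw [hM'edge]; simp
  have hfM'e : f ∉ M'.edgeSet := fun h => hfM' h
  have hMedge : M.edgeSet = insert s(u, v) M'.edgeSet := by
    rw [hM'edge]
    ext e'
    simp only [Set.mem_insert_iff, Set.mem_diff, Set.mem_singleton_iff]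
    constructor
    · intro h
      by_cases he : e' = s(u, v)
      · exact Or.inl he
      · exact Or.inr ⟨h, he⟩
    · rintro (rfl | ⟨h, -⟩)
      · exact M.mem_edgeSet.mpr huv
      · exact h
  have hM''edge : M''.edgeSet = insert f M'.edgeSet := by
    rw [hM''def, edgeSet_sup, edgeSet_fromEdgeSet]
    ext e'
    simp only [Set.mem_union, Set.mem_diff, Set.mem_singleton_iff, Set.mem_setOf_eq,
      Set.mem_insert_iff]
    constructor
    · rintro (h | ⟨h1, -⟩)
      · exact Or.inr h
      · exact Or.inl h1
    · rintro (h | h)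
      · exact Or.inr ⟨h, h ▸ hfdiag⟩
      · exact Or.inl h
  -- weight contradiction
  have key := hM.2.2.2 M'' hM''G hac hconn
  rw [weightSum, weightSum, hMedge, hM''edge,
    sum_indicator_insert w _ _ heM', sum_indicator_insert w _ _ hfM'e] at key
  have : w s(u, v) ≤ w f := by linarith
  rw [← hc] at this
  exact absurd hwxy (not_lt.mpr this)
end

section
/- If each of n disjoint groups must receive at most α messages and send at most α messages, and within each group of α consecutive nodes the messages are first sorted by destination, then after redistributing the i-th smallest message of each node to the ((i−1 mod α)+1)-th member of its group, every node holds O(1) messages per destination. -/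
/-- routing pigeonhole: messages indexed by `Fin M` are sorted by
destination (`dest` is monotone) and no destination receives more than `c·α` messages.
If the `j`-th message in sorted order is assigned to group member `j mod α` (round-robin
distribution within a group of `α` nodes), then every node holds at most `c + 1` (i.e.
`O(1)`) messages per destination. -/
theorem stmt16 (α M c : ℕ) (hα : 0 < α) (dest : Fin M → ℕ)
    (hmono : Monotone dest)
    (hdest : ∀ d : ℕ, (Finset.univ.filter (fun j : Fin M => dest j = d)).card ≤ c * α) :
    ∀ i d : ℕ,
      (Finset.univ.filter (fun j : Fin M => dest j = d ∧ (j : ℕ) % α = i)).card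
        ≤ c + 1 := by
  intro i d
  set T := Finset.univ.filter (fun j : Fin M => dest j = d ∧ (j : ℕ) % α = i) with hT
  rcases T.eq_empty_or_nonempty with h | hne
  · simp [h]
  set m := T.min' hne with hm
  have hmT : m ∈ T := T.min'_mem hne
  have hmd : dest m = d := (Finset.mem_filter.mp hmT).2.1
  have hmr : (m : ℕ) % α = i := (Finset.mem_filter.mp hmT).2.2
  -- image of the destination-d set under Fin.val
  set Sv : Finset ℕ := (Finset.univ.filter (fun j : Fin M => dest j = d)).image Fin.val
    with hSv
  have hSvcard : Sv.card ≤ c * α := by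
    calc Sv.card ≤ (Finset.univ.filter (fun j : Fin M => dest j = d)).card :=
          Finset.card_image_le
      _ ≤ c * α := hdest d
  have key : ∀ j ∈ T, (j : ℕ) - (m : ℕ) + 1 ≤ c * α := by
    intro j hj
    have hjd : dest j = d := (Finset.mem_filter.mp hj).2.1
    have hmj : m ≤ j := T.min'_le j hj
    have hsub : Finset.Icc (m : ℕ) (j : ℕ) ⊆ Sv := by
      intro k hk
      obtain ⟨h1, h2⟩ := Finset.mem_Icc.mp hk
      have hkM : k < M := lt_of_le_of_lt h2 j.isLt
      refine Finset.mem_image.mpr ⟨⟨k, hkM⟩, ?_, rfl⟩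
      refine Finset.mem_filter.mpr ⟨Finset.mem_univ _, ?_⟩
      have h3 : dest m ≤ dest ⟨k, hkM⟩ := hmono (by simpa [Fin.le_def] using h1)
      have h4 : dest ⟨k, hkM⟩ ≤ dest j := hmono (by simpa [Fin.le_def] using h2)
      omega
    calc (j : ℕ) - (m : ℕ) + 1 = (Finset.Icc (m : ℕ) (j : ℕ)).card := by
          rw [Nat.card_Icc]; omega
      _ ≤ Sv.card := Finset.card_le_card hsub
      _ ≤ c * α := hSvcard
  have : T.card ≤ (Finset.range (c + 1)).card := by
    refine Finset.card_le_card_of_injOn (fun j => ((j : ℕ) - (m : ℕ)) / α) ?_ ?_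
    · intro j hj
      have hkey := key j hj
      have : ((j : ℕ) - (m : ℕ)) / α < c + 1 := by
        rw [Nat.div_lt_iff_lt_mul hα]
        have : c * α ≤ (c + 1) * α := Nat.mul_le_mul_right α (Nat.le_succ c)
        omega
      simpa [Finset.mem_range] using this
    · intro j hj j' hj' heq
      have hjr : (j : ℕ) % α = i := (Finset.mem_filter.mp hj).2.2
      have hjr' : (j' : ℕ) % α = i := (Finset.mem_filter.mp hj').2.2
      have hmj : (m : ℕ) ≤ (j : ℕ) := T.min'_le j hj
      have hmj' : (m : ℕ) ≤ (j' : ℕ) := T.min'_le j' hj'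
      have hd1 : α ∣ (j : ℕ) - (m : ℕ) :=
        Nat.dvd_of_mod_eq_zero (Nat.sub_mod_eq_zero_of_mod_eq (by omega))
      have hd2 : α ∣ (j' : ℕ) - (m : ℕ) :=
        Nat.dvd_of_mod_eq_zero (Nat.sub_mod_eq_zero_of_mod_eq (by omega))
      have e1 : ((j : ℕ) - (m : ℕ)) / α * α = (j : ℕ) - (m : ℕ) :=
        Nat.div_mul_cancel hd1
      have e2 : ((j' : ℕ) - (m : ℕ)) / α * α = (j' : ℕ) - (m : ℕ) :=
        Nat.div_mul_cancel hd2
      have : (j : ℕ) = (j' : ℕ) := by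
        have := congrArg (· * α) heq
        simp only at this
        omega
      exact Fin.ext this
  simpa using this
end
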